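/- Let A be an abelian category with enough projectives and M a τ-rigid subcategory (i.e. Ext¹(M, Fac M) = 0). Then Fac M is closed under extensions: if 0 → X → Y → Z → 0 is a short exact sequence with X, Z ∈ Fac M, then Y ∈ Fac M. -/

import Mathlib

open CategoryTheory Limits Opposite

noncomputable section

universe v u

variable {C : Type u} [Category.{v} C] [Abelian C] [EnoughProjectives C]

attribute [local instance] CategoryTheory.Abelian.hasFiniteBiproducts

/-- `Fac M`: quotients of finite direct sums of objects of `M`. -/
def Fac (M : Set C) : Set C :=
  {X | ∃ (n : ℕ) (f : Fin n → C), (∀ i, f i ∈ M) ∧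
    haveI : HasBiproductsOfShape (Fin n) C := HasFiniteBiproducts.out n
    ∃ e : (⨁ f) ⟶ X, Epi e}

/-- Vanishing of `Ext¹(X, Y)`. -/
def ext1Zero (X Y : C) : Prop := Subsingleton (((Ext ℤ C 1).obj (op X)).obj Y)

/-- Vanishing of `Ext²(X, Y)`. -/
def ext2Zero (X Y : C) : Prop := Subsingleton (((Ext ℤ C 2).obj (op X)).obj Y)

/-- `v : P ⟶ V₀` is a left `M`-approximation. -/
def IsLeftApprox (M : Set C) {P V₀ : C} (v : P ⟶ V₀) : Prop :=
  ∀ V' ∈ M, ∀ h : P ⟶ V', ∃ t : V₀ ⟶ V', v ≫ t = h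

/-- `u : U₀ ⟶ X` is a right `M`-approximation. -/
def IsRightApprox (M : Set C) {U₀ X : C} (u : U₀ ⟶ X) : Prop :=
  ∀ M' ∈ M, ∀ h : M' ⟶ X, ∃ t : M' ⟶ U₀, t ≫ u = h

/-- The Ext-projective objects of `S`. -/
def ExtProj (S : Set C) : Set C := {D ∈ S | ∀ Z ∈ S, ext1Zero D Z}

/-- `M` is τ-rigid: `Ext¹(M, Fac M) = 0`. -/
def TauRigid (M : Set C) : Prop := ∀ M₀ ∈ M, ∀ X ∈ Fac M, ext1Zero M₀ X

/-- `P` admits an exact sequence `P ⟶ Ma ⟶ Mb ⟶ 0` with `Ma, Mb ∈ M` and the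
first map a left `M`-approximation. -/
def HasApproxSeq (M : Set C) (P : C) : Prop :=
  ∃ M₀ ∈ M, ∃ M₁ ∈ M, ∃ (m : P ⟶ M₀) (g : M₀ ⟶ M₁) (w : m ≫ g = 0),
    (ShortComplex.mk m g w).Exact ∧ Epi g ∧ IsLeftApprox M m

/-- `M` is a support τ-tilting subcategory. -/
def SupportTauTilting (M : Set C) : Prop :=
  TauRigid M ∧ ∀ P : C, Projective P → HasApproxSeq M P

/-- `0 ⟶ X ⟶ Y ⟶ Z ⟶ 0` is a short exact sequence. -/
def SES {X Y Z : C} (f : X ⟶ Y) (g : Y ⟶ Z) : Prop :=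
  ∃ w : f ≫ g = 0, (ShortComplex.mk f g w).Exact ∧ Mono f ∧ Epi g

/-- `U` is hereditary: `Ext²(U, −) = 0`. -/
def Hereditary1 (U : Set C) : Prop := ∀ U₀ ∈ U, ∀ X : C, ext2Zero U₀ X

/-- `U` is partial tilting. -/
def PartialTilting (U : Set C) : Prop :=
  Hereditary1 U ∧ ∀ U₀ ∈ U, ∀ U₁ ∈ U, ext1Zero U₀ U₁

/-- `U` is tilting. -/
def Tilting (U : Set C) : Prop :=
  PartialTilting U ∧ ∀ P : C, Projective P →
    ∃ Ua ∈ U, ∃ Ub ∈ U, ∃ (i : P ⟶ Ua) (p : Ua ⟶ Ub), SES i p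

/-- `U^⊥₁ = {X | Ext¹(U, X) = 0}`. -/
def Perp1 (U : Set C) : Set C := {X | ∀ U₀ ∈ U, ext1Zero U₀ X}

/-- `M` is closed under finite direct sums and direct summands. -/
def AdditivelyClosed (M : Set C) : Prop :=
  (∀ (n : ℕ) (f : Fin n → C), (∀ i, f i ∈ M) →
    haveI : HasBiproductsOfShape (Fin n) C := HasFiniteBiproducts.out n
    (⨁ f) ∈ M) ∧
  (∀ M₀ ∈ M, ∀ (X : C) (r : M₀ ⟶ X) (s : X ⟶ M₀), s ≫ r = 𝟙 X → X ∈ M)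

/-- The additive closure of a class of objects: direct summands of finite
direct sums of its objects. -/
def AddClosure (X : Set C) : Set C :=
  {Y | ∃ (n : ℕ) (f : Fin n → C), (∀ i, f i ∈ X) ∧
    haveI : HasBiproductsOfShape (Fin n) C := HasFiniteBiproducts.out n
    ∃ (r : (⨁ f) ⟶ Y) (s : Y ⟶ ⨁ f), s ≫ r = 𝟙 Y}

lemma lift_of_ext1Zero {P : C} {S : ShortComplex C} (hS : S.ShortExact)
    (hext : Subsingleton (((Ext ℤ C 1).obj (op P)).obj S.X₁)) (e : P ⟶ S.X₃) :
    ∃ φ : P ⟶ S.X₂, φ ≫ S.g = e := by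
  haveI := hS.epi_g
  haveI := hS.mono_f
  let R : ProjectiveResolution P := ProjectiveResolution.of P
  haveI := R.projective 0
  haveI := R.projective 1
  let q : R.complex.X 0 ⟶ S.X₂ := Projective.factorThru (R.π.f 0 ≫ e) S.g
  have hq : q ≫ S.g = R.π.f 0 ≫ e := Projective.factorThru_comp _ _
  have hdq : (R.complex.d 1 0 ≫ q) ≫ S.g = 0 := by
    rw [Category.assoc, hq]; erw [← Category.assoc, R.complex_d_comp_π_f_zero, zero_comp]
  obtain ⟨x, hx0⟩ := KernelFork.IsLimit.lift' hS.fIsKernel (R.complex.d 1 0 ≫ q) hdq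
  have hx : x ≫ S.f = R.complex.d 1 0 ≫ q := hx0
  -- x : R.complex.X 1 ⟶ S.X₁, hx : x ≫ S.f = R.complex.d 1 0 ≫ q
  let K := R.complex.linearYonedaObj ℤ S.X₁
  have hKe : K.ExactAt 1 := by
    rw [HomologicalComplex.exactAt_iff_isZero_homology]
    exact (ModuleCat.isZero_of_subsingleton _).of_iso (R.isoExt 1 S.X₁).symm
  rw [HomologicalComplex.exactAt_iff' K 0 1 2 (by simp) (by simp)] at hKe
  have hcocycle : (K.sc' 0 1 2).g x = 0 := by
    show R.complex.d 2 1 ≫ x = 0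
    rw [← cancel_mono S.f, Category.assoc, hx, zero_comp]
    rw [← Category.assoc, HomologicalComplex.d_comp_d, zero_comp]
  obtain ⟨(t : R.complex.X 0 ⟶ S.X₁), ht⟩ := (ShortComplex.moduleCat_exact_iff _).mp hKe x hcocycle
  have ht' : R.complex.d 1 0 ≫ t = x := ht
  have hψ : R.complex.d 1 0 ≫ (q - t ≫ S.f) = 0 := by
    rw [Preadditive.comp_sub, ← Category.assoc, ht', hx, sub_self]
  obtain ⟨φ, hφ⟩ := CokernelCofork.IsColimit.desc' R.isColimitCokernelCofork (q - t ≫ S.f) hψ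
  refine ⟨φ, ?_⟩
  erw [← cancel_epi (R.π.f 0), ← Category.assoc]
  rw [show R.π.f 0 ≫ φ = q - t ≫ S.f from hφ]
  rw [Preadditive.sub_comp, Category.assoc, hq, S.zero, comp_zero, sub_zero]

theorem stmt2 (M : Set C) (h : TauRigid M) :
    ∀ S : ShortComplex C, S.ShortExact →
      S.X₁ ∈ Fac M → S.X₃ ∈ Fac M → S.X₂ ∈ Fac M := by
  intro S hS hX1 hX3
  obtain ⟨n1, f1, hf1, eX, heX⟩ := hX1
  obtain ⟨n2, f2, hf2, eZ, heZ⟩ := hX3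
  have hφ : ∀ j : Fin n2, ∃ φ : f2 j ⟶ S.X₂, φ ≫ S.g = biproduct.ι f2 j ≫ eZ := fun j =>
    lift_of_ext1Zero hS (h (f2 j) (hf2 j) S.X₁ ⟨n1, f1, hf1, eX, heX⟩) (biproduct.ι f2 j ≫ eZ)
  choose φ hφ using hφ
  refine ⟨n1 + n2, Fin.append f1 f2, ?_, ?_⟩
  · intro i
    refine Fin.addCases (fun j => ?_) (fun j => ?_) i
    · rw [Fin.append_left]; exact hf1 j
    · rw [Fin.append_right]; exact hf2 j
  · haveI := hS.epi_g
    let comp : ∀ i : Fin (n1 + n2), Fin.append f1 f2 i ⟶ S.X₂ := fun i =>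
      Fin.addCases (motive := fun i => Fin.append f1 f2 i ⟶ S.X₂)
        (fun j => eqToHom (Fin.append_left f1 f2 j) ≫ biproduct.ι f1 j ≫ eX ≫ S.f)
        (fun j => eqToHom (Fin.append_right f1 f2 j) ≫ φ j) i
    refine ⟨biproduct.desc comp, ?_⟩
    rw [Preadditive.epi_iff_cancel_zero]
    intro T c hc
    have hcomp : ∀ i, comp i ≫ c = 0 := fun i => by
      rw [← biproduct.ι_desc comp i, Category.assoc, hc, comp_zero]
    have hfc : S.f ≫ c = 0 := by
      rw [← cancel_epi eX]
      apply biproduct.hom_ext'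
      intro j
      have := hcomp (Fin.castAdd n2 j)
      simp only [comp, Fin.addCases_left] at this
      simpa using ((eqToIso (Fin.append_left f1 f2 j)).cancel_iso_hom_left _ 0).mp
        (by simpa using this)
    obtain ⟨d, hd0⟩ := CokernelCofork.IsColimit.desc' hS.gIsCokernel c hfc
    have hd : S.g ≫ d = c := hd0
    have hdz : d = 0 := by
      rw [← cancel_epi eZ]
      apply biproduct.hom_ext'
      intro j
      have := hcomp (Fin.natAdd n1 j)
      simp only [comp, Fin.addCases_right] at this
      have h2 : φ j ≫ c = 0 :=
        ((eqToIso (Fin.append_right f1 f2 j)).cancel_iso_hom_left _ 0).mp (by simpa using this)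
      rw [← hd, ← Category.assoc, hφ j] at h2
      simpa using h2
    rw [← hd, hdz, comp_zero]
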